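/- In the two-parameter quantum group U_q(g) of type G₂, one has [x₁, [[[x₁⁻,x₂⁻],x₂⁻],x₂⁻]] = q⁻³(1 − q⁻¹)(1 − q⁻²)(1 − q⁻³)·(x₂⁻)³·g₁f₁. -/
import Mathlib

lemma step6 {k U : Type} [Field k] [Ring U] [Algebra k U]
    (x b A E : U) (s β γ t : k)
    (hxA : x * A = s • (A * x) + E)
    (hxb : x * b = β • (b * x))
    (hEb : E * b = γ • (b * E)) :
    x * (A * b - t • (b * A)) =
      (s * β) • ((A * b - t • (b * A)) * x) + (γ - t * β) • (b * E) := by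
  have e1 : x * (A * b) = (s * β) • (A * b * x) + γ • (b * E) := by
    calc x * (A * b) = (x * A) * b := by rw [mul_assoc]
    _ = (s • (A * x) + E) * b := by rw [hxA]
    _ = s • (A * (x * b)) + E * b := by rw [add_mul, smul_mul_assoc, mul_assoc]
    _ = s • (A * (β • (b * x))) + γ • (b * E) := by rw [hxb, hEb]
    _ = (s * β) • (A * b * x) + γ • (b * E) := by
        rw [mul_smul_comm, smul_smul, mul_assoc]
  have e2 : x * (b * A) = (s * β) • (b * A * x) + β • (b * E) := by
    calc x * (b * A) = (x * b) * A := by rw [mul_assoc]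
    _ = β • (b * (x * A)) := by rw [hxb, smul_mul_assoc, mul_assoc]
    _ = β • (b * (s • (A * x) + E)) := by rw [hxA]
    _ = (s * β) • (b * A * x) + β • (b * E) := by
        rw [mul_add, mul_smul_comm, smul_add, smul_smul, mul_assoc, mul_comm β s]
  calc x * (A * b - t • (b * A)) = x * (A * b) - t • (x * (b * A)) := by
        rw [mul_sub, mul_smul_comm]
  _ = _ := by rw [e1, e2, sub_mul, smul_mul_assoc]; module

lemma step6' {k U : Type} [Field k] [Ring U] [Algebra k U]
    (x b A E : U) (s β t : k)
    (hxA : x * A = s • (A * x) + E)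
    (hxb : x * b = β • (b * x)) :
    x * (A * b - t • (b * A)) =
      (s * β) • ((A * b - t • (b * A)) * x) + (E * b - (t * β) • (b * E)) := by
  have e1 : x * (A * b) = (s * β) • (A * b * x) + E * b := by
    calc x * (A * b) = (x * A) * b := by rw [mul_assoc]
    _ = (s • (A * x) + E) * b := by rw [hxA]
    _ = s • (A * (x * b)) + E * b := by rw [add_mul, smul_mul_assoc, mul_assoc]
    _ = s • (A * (β • (b * x))) + E * b := by rw [hxb]
    _ = (s * β) • (A * b * x) + E * b := by
        rw [mul_smul_comm, smul_smul, mul_assoc]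
  have e2 : x * (b * A) = (s * β) • (b * A * x) + β • (b * E) := by
    calc x * (b * A) = (x * b) * A := by rw [mul_assoc]
    _ = β • (b * (x * A)) := by rw [hxb, smul_mul_assoc, mul_assoc]
    _ = β • (b * (s • (A * x) + E)) := by rw [hxA]
    _ = (s * β) • (b * A * x) + β • (b * E) := by
        rw [mul_add, mul_smul_comm, smul_add, smul_smul, mul_assoc, mul_comm β s]
  calc x * (A * b - t • (b * A)) = x * (A * b) - t • (x * (b * A)) := by
        rw [mul_sub, mul_smul_comm]
  _ = _ := by rw [e1, e2, sub_mul, smul_mul_assoc]; module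

theorem stmt6 (k U : Type) [Field k] [Ring U] [Algebra k U]
    (q p12 p21 : kˣ) (hq : (p12:k) * (p21:k) = (q:k)⁻¹ ^ 3)
    (x1 x2 x1m x2m : U) (g1 g2 f1 f2 : Uˣ)
    (hg1g2 : (g1:U) * g2 = (g2:U) * g1)
    (hg1f1 : (g1:U) * f1 = (f1:U) * g1)
    (hg1f2 : (g1:U) * f2 = (f2:U) * g1)
    (hg2f1 : (g2:U) * f1 = (f1:U) * g2)
    (hg2f2 : (g2:U) * f2 = (f2:U) * g2)
    (hf1f2 : (f1:U) * f2 = (f2:U) * f1)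
    (hx1g1 : x1 * g1 = ((q:k)^3) • ((g1:U) * x1))
    (hx1g2 : x1 * g2 = (p12:k) • ((g2:U) * x1))
    (hx2g1 : x2 * g1 = (p21:k) • ((g1:U) * x2))
    (hx2g2 : x2 * g2 = (q:k) • ((g2:U) * x2))
    (hx1f1 : x1 * f1 = ((q:k)^3) • ((f1:U) * x1))
    (hx1f2 : x1 * f2 = (p21:k) • ((f2:U) * x1))
    (hx2f1 : x2 * f1 = (p12:k) • ((f1:U) * x2))
    (hx2f2 : x2 * f2 = (q:k) • ((f2:U) * x2))
    (hx1mg1 : x1m * g1 = ((q:k)^3)⁻¹ • ((g1:U) * x1m))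
    (hx1mg2 : x1m * g2 = (p12:k)⁻¹ • ((g2:U) * x1m))
    (hx2mg1 : x2m * g1 = (p21:k)⁻¹ • ((g1:U) * x2m))
    (hx2mg2 : x2m * g2 = (q:k)⁻¹ • ((g2:U) * x2m))
    (hx1mf1 : x1m * f1 = ((q:k)^3)⁻¹ • ((f1:U) * x1m))
    (hx1mf2 : x1m * f2 = (p21:k)⁻¹ • ((f2:U) * x1m))
    (hx2mf1 : x2m * f1 = (p12:k)⁻¹ • ((f1:U) * x2m))
    (hx2mf2 : x2m * f2 = (q:k)⁻¹ • ((f2:U) * x2m))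
    (h11 : x1 * x1m - ((q:k)^3) • (x1m * x1) = 1 - (g1:U) * f1)
    (h12 : x1 * x2m - (p21:k) • (x2m * x1) = 0)
    (h21 : x2 * x1m - (p12:k) • (x1m * x2) = 0)
    (h22 : x2 * x2m - (q:k) • (x2m * x2) = 1 - (g2:U) * f2) :
    x1 * (((x1m * x2m - (p21:k)⁻¹ • (x2m * x1m)) * x2m - ((p21:k)⁻¹ * (q:k)⁻¹) • (x2m * (x1m * x2m - (p21:k)⁻¹ • (x2m * x1m)))) * x2m - ((p21:k)⁻¹ * (q:k)⁻¹^2) • (x2m * ((x1m * x2m - (p21:k)⁻¹ • (x2m * x1m)) * x2m - ((p21:k)⁻¹ * (q:k)⁻¹) • (x2m * (x1m * x2m - (p21:k)⁻¹ • (x2m * x1m)))))) - ((q:k)^3 * (p21:k)^3) • ((((x1m * x2m - (p21:k)⁻¹ • (x2m * x1m)) * x2m - ((p21:k)⁻¹ * (q:k)⁻¹) • (x2m * (x1m * x2m - (p21:k)⁻¹ • (x2m * x1m)))) * x2m - ((p21:k)⁻¹ * (q:k)⁻¹^2) • (x2m * ((x1m * x2m - (p21:k)⁻¹ • (x2m *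 x1m)) * x2m - ((p21:k)⁻¹ * (q:k)⁻¹) • (x2m * (x1m * x2m - (p21:k)⁻¹ • (x2m * x1m)))))) * x1) = ((q:k)⁻¹^3 * (1 - (q:k)⁻¹) * (1 - (q:k)⁻¹^2) * (1 - (q:k)⁻¹^3)) • (x2m * x2m * x2m * ((g1:U) * (f1:U))) := by
  have hq0 : (q:k) ≠ 0 := q.ne_zero
  have hp0 : (p21:k) ≠ 0 := p21.ne_zero
  set G : U := (g1:U) * f1 with hG
  -- commutation of g1 f1 with x2m
  have hg1b : (g1:U) * x2m = (p21:k) • (x2m * g1) := by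
    rw [hx2mg1, smul_smul, mul_inv_cancel₀ hp0, one_smul]
  have hf1b : (f1:U) * x2m = (p12:k) • (x2m * f1) := by
    rw [hx2mf1, smul_smul, mul_inv_cancel₀ p12.ne_zero, one_smul]
  have hGb : G * x2m = ((q:k)⁻¹^3) • (x2m * G) := by
    rw [hG, mul_assoc, hf1b, mul_smul_comm, ← mul_assoc, hg1b, smul_mul_assoc,
      smul_smul, mul_assoc, hq]
  -- base commutations of x1
  have hx1a : x1 * x1m = ((q:k)^3) • (x1m * x1) + ((1:U) - G) := by
    rw [hG, ← h11]; abel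
  have hx1b : x1 * x2m = (p21:k) • (x2m * x1) := sub_eq_zero.mp h12
  -- first bracket
  have hA1 := step6' x1 x2m x1m ((1:U) - G) ((q:k)^3) (p21:k) ((p21:k)⁻¹) hx1a hx1b
  have htail1 : ((1:U) - G) * x2m - ((p21:k)⁻¹ * (p21:k)) • (x2m * ((1:U) - G))
      = (1 - (q:k)⁻¹^3) • (x2m * G) := by
    rw [sub_mul, one_mul, hGb, inv_mul_cancel₀ hp0, one_smul, mul_sub, mul_one]
    module
  rw [htail1] at hA1
  -- E1 and its commutation with x2m
  set E1 : U := (1 - (q:k)⁻¹^3) • (x2m * G) with hE1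
  have hE1b : E1 * x2m = ((q:k)⁻¹^3) • (x2m * E1) := by
    rw [hE1]
    simp only [smul_mul_assoc, mul_assoc]
    rw [hGb]
    simp only [mul_smul_comm, smul_smul]
    match_scalars <;> ring
  -- second bracket
  have hA2 := step6 x1 x2m (x1m * x2m - (p21:k)⁻¹ • (x2m * x1m)) E1
    ((q:k)^3 * (p21:k)) (p21:k) ((q:k)⁻¹^3) ((p21:k)⁻¹ * (q:k)⁻¹) hA1 hx1b hE1b
  have hc2 : (q:k)⁻¹^3 - (p21:k)⁻¹ * (q:k)⁻¹ * (p21:k) = (q:k)⁻¹^3 - (q:k)⁻¹ := by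
    rw [mul_right_comm, inv_mul_cancel₀ hp0, one_mul]
  rw [hc2] at hA2
  set E2 : U := ((q:k)⁻¹^3 - (q:k)⁻¹) • (x2m * E1) with hE2
  have hE2b : E2 * x2m = ((q:k)⁻¹^3) • (x2m * E2) := by
    rw [hE2]
    simp only [smul_mul_assoc, mul_assoc]
    rw [hE1b]
    simp only [mul_smul_comm, smul_smul]
    match_scalars <;> ring
  -- third bracket
  have hA3 := step6 x1 x2m
    ((x1m * x2m - (p21:k)⁻¹ • (x2m * x1m)) * x2m -
      ((p21:k)⁻¹ * (q:k)⁻¹) • (x2m * (x1m * x2m - (p21:k)⁻¹ • (x2m * x1m)))) E2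
    ((q:k)^3 * (p21:k) * (p21:k)) (p21:k) ((q:k)⁻¹^3) ((p21:k)⁻¹ * (q:k)⁻¹^2)
    hA2 hx1b hE2b
  have hc3 : (q:k)⁻¹^3 - (p21:k)⁻¹ * (q:k)⁻¹^2 * (p21:k) = (q:k)⁻¹^3 - (q:k)⁻¹^2 := by
    rw [mul_right_comm, inv_mul_cancel₀ hp0, one_mul]
  rw [hc3] at hA3
  rw [hA3, hE2, hE1,
    show x2m * x2m * x2m * G = x2m * (x2m * (x2m * G)) from by rw [mul_assoc, mul_assoc]]
  simp only [mul_smul_comm, smul_smul]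
  match_scalars <;> ring
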